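/- Let κ be an uncountable regular cardinal and λ a cardinal with ω ≤ λ ≤ 2^κ. Then there exists a 𝓒-independent family of cardinality λ on κ: a family of λ subsets of κ all of whose finite Boolean combinations are stationary. -/

import Mathlib

open Cardinal

/-- `C` is a club (closed unbounded) subset of the ordinal `o`. -/
def IsClubIn (C : Set Ordinal) (o : Ordinal) : Prop :=
  C ⊆ Set.Iio o ∧ (∀ a < o, ∃ b ∈ C, a ≤ b) ∧
    (∀ a < o, a ≠ 0 → (∀ b < a, ∃ c ∈ C, b < c ∧ c < a) → a ∈ C)

/-- `S` is a stationary subset of the ordinal `o`: it meets every club in `o`. -/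
def IsStationaryIn (S : Set Ordinal) (o : Ordinal) : Prop :=
  S ⊆ Set.Iio o ∧ ∀ C, IsClubIn C o → (S ∩ C).Nonempty

lemma club_Iio (κ : Cardinal.{0}) : IsClubIn (Set.Iio κ.ord) κ.ord :=
  ⟨subset_rfl, fun a ha => ⟨a, ha, le_rfl⟩, fun a ha _ _ => ha⟩

lemma club_exists_gt {κ : Cardinal.{0}} (hu : ℵ₀ ≤ κ) {C : Set Ordinal}
    (hC : IsClubIn C κ.ord) {a : Ordinal} (ha : a < κ.ord) : ∃ c ∈ C, a < c := by
  have h1 : a + 1 < κ.ord := (Cardinal.isSuccLimit_ord hu).succ_lt ha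
  obtain ⟨b, hb, hab⟩ := hC.2.1 (a + 1) h1
  exact ⟨b, hb, lt_of_lt_of_le (lt_add_one a) hab⟩

lemma club_iInter {κ : Cardinal.{0}} (hreg : κ.IsRegular) (hu : ℵ₀ < κ)
    {J : Type} [Nonempty J] (hJ : #J < κ) {C : J → Set Ordinal}
    (h : ∀ j, IsClubIn (C j) κ.ord) : IsClubIn (⋂ j, C j) κ.ord := by
  have hcof : κ.ord.cof = κ := hreg.cof_eq
  refine ⟨(Set.iInter_subset C (Classical.arbitrary J)).trans (h _).1, ?_, ?_⟩
  · intro a ha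
    have hnext : ∀ x : Ordinal, x < κ.ord → ∀ j : J, ∃ c, c ∈ C j ∧ x < c :=
      fun x hx j => by
        obtain ⟨c, hc, hxc⟩ := club_exists_gt hu.le (h j) hx
        exact ⟨c, hc, hxc⟩
    classical
    set next : Ordinal → Ordinal := fun x =>
      if hx : x < κ.ord then (⨆ j : J, (hnext x hx j).choose) ⊔ (x + 1) else 0 with hnextdef
    have hnext_lt : ∀ x, x < κ.ord → next x < κ.ord := by
      intro x hx
      rw [hnextdef]
      simp only [hx, dif_pos]
      apply max_lt _ ((Cardinal.isSuccLimit_ord hu.le).succ_lt hx)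
      apply Ordinal.iSup_lt_ord (by rwa [hcof])
      intro j
      exact (h j).1 (hnext x hx j).choose_spec.1
    have hnext_gt : ∀ x, x < κ.ord → x < next x := by
      intro x hx
      rw [hnextdef]; simp only [hx, dif_pos]
      exact lt_of_lt_of_le (lt_add_one x) (le_max_right _ _)
    have hnext_mem : ∀ x (hx : x < κ.ord) (j : J), ∃ c ∈ C j, x < c ∧ c ≤ next x := by
      intro x hx j
      refine ⟨(hnext x hx j).choose, (hnext x hx j).choose_spec.1,
        (hnext x hx j).choose_spec.2, ?_⟩
      rw [hnextdef]; simp only [hx, dif_pos]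
      exact le_trans (Ordinal.le_iSup (fun j : J => (hnext x hx j).choose) j) (le_max_left _ _)
    set f : ℕ → Ordinal := fun n => next^[n] a with hf
    have hfsucc : ∀ n, f (n + 1) = next (f n) := fun n => Function.iterate_succ_apply' next n a
    have hflt : ∀ n, f n < κ.ord := by
      intro n
      induction n with
      | zero => exact ha
      | succ n ih => rw [hfsucc]; exact hnext_lt _ ih
    have hfmono : ∀ n, f n < f (n + 1) := by
      intro n
      rw [hfsucc]
      exact hnext_gt _ (hflt n)
    set s := ⨆ n, f n with hs
    have hbdd : BddAbove (Set.range f) := ⟨κ.ord, by rintro x ⟨n, rfl⟩; exact (hflt n).le⟩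
    have hfs : ∀ n, f n ≤ s := fun n => le_ciSup hbdd n
    have hslt : s < κ.ord :=
      Ordinal.iSup_lt_ord (by rw [hcof]; exact lt_of_le_of_lt Cardinal.mk_nat.le hu) hflt
    have hlt_s : ∀ {b}, b < s → ∃ n, b < f n := by
      intro b hb
      by_contra hcon
      push_neg at hcon
      exact absurd (ciSup_le hcon) (not_le.mpr hb)
    have h0lt : f 0 < s := lt_of_lt_of_le (hfmono 0) (hfs 1)
    refine ⟨s, Set.mem_iInter.mpr fun j => ?_, hfs 0⟩
    apply (h j).2.2 s hslt (lt_of_le_of_lt zero_le h0lt).ne'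
    intro b hb
    obtain ⟨n, hn⟩ := hlt_s hb
    obtain ⟨c, hc, hfc, hcle⟩ := hnext_mem (f n) (hflt n) j
    refine ⟨c, hc, lt_trans hn hfc,
      lt_of_le_of_lt ?_ (lt_of_lt_of_le (hfmono (n + 1)) (hfs (n + 2)))⟩
    rw [hfsucc]
    exact hcle
  · intro a ha h0 hlim
    rw [Set.mem_iInter]
    intro j
    apply (h j).2.2 a ha h0
    intro b hb
    obtain ⟨c, hc, h1, h2⟩ := hlim b hb
    exact ⟨c, (Set.mem_iInter.mp hc) j, h1, h2⟩

lemma stationary_superset {κ : Cardinal.{0}} {W W' : Set Ordinal}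
    (hW : IsStationaryIn W κ.ord) (h1 : W ⊆ W') (h2 : W' ⊆ Set.Iio κ.ord) :
    IsStationaryIn W' κ.ord := by
  refine ⟨h2, fun C hC => ?_⟩
  obtain ⟨x, hx1, hx2⟩ := hW.2 C hC
  exact ⟨x, h1 hx1, hx2⟩

lemma exists_stationary_of_cover {κ : Cardinal.{0}} (hreg : κ.IsRegular) (hu : ℵ₀ < κ)
    {J : Type} [Nonempty J] (hJ : #J < κ) {A : J → Set Ordinal}
    (hA : ∀ j, A j ⊆ Set.Iio κ.ord) {W : Set Ordinal} (hW : IsStationaryIn W κ.ord)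
    (hWU : W ⊆ ⋃ j, A j) : ∃ j, IsStationaryIn (A j) κ.ord := by
  by_contra hcon
  push_neg at hcon
  have hcl : ∀ j, ∃ C, IsClubIn C κ.ord ∧ A j ∩ C = ∅ := by
    intro j
    have := hcon j
    rw [IsStationaryIn] at this
    push_neg at this
    obtain ⟨C, hC, hCe⟩ := this (hA j)
    exact ⟨C, hC, hCe⟩
  choose Cl hCl1 hCl2 using hcl
  obtain ⟨x, hxW, hxC⟩ := hW.2 _ (club_iInter hreg hu hJ hCl1)
  obtain ⟨j, hj⟩ := Set.mem_iUnion.mp (hWU hxW)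
  have : x ∈ A j ∩ Cl j := ⟨hj, Set.mem_iInter.mp hxC j⟩
  rw [hCl2 j] at this
  exact this

lemma stationary_Ioo {κ : Cardinal.{0}} (hu : ℵ₀ ≤ κ) {b : Ordinal} (hb : b < κ.ord) :
    IsStationaryIn (Set.Ioo b κ.ord) κ.ord := by
  refine ⟨fun x hx => hx.2, fun C hC => ?_⟩
  obtain ⟨c, hc, hbc⟩ := club_exists_gt hu hC hb
  exact ⟨c, ⟨hbc, hC.1 hc⟩, hc⟩

lemma stationary_cof {κ : Cardinal.{0}} (hreg : κ.IsRegular) (hu : ℵ₀ < κ)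
    {μ : Cardinal.{0}} (hμ : μ.IsRegular) (hμκ : μ < κ) :
    IsStationaryIn {a : Ordinal | a < κ.ord ∧ a.cof = μ} κ.ord := by
  have hcof : κ.ord.cof = κ := hreg.cof_eq
  refine ⟨fun x hx => hx.1, fun C hC => ?_⟩
  set s : Set Ordinal := C ∪ Set.Ici κ.ord with hsdef
  have hsub : ∀ {x}, x ∈ s → x < κ.ord → x ∈ C := by
    rintro x (hx | hx) hlt
    · exact hx
    · exact absurd hlt (not_lt.mpr hx)
  have hsunb : ¬ BddAbove s := by
    rintro ⟨B, hB⟩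
    have : κ.ord ⊔ (B + 1) ∈ s := Or.inr (show κ.ord ≤ _ from le_sup_left)
    have := hB this
    have : B + 1 ≤ B := le_trans (le_max_right _ _) this
    exact absurd this (not_le.mpr (lt_add_one B))
  have hclosed : IsClosed s := by
    rw [Ordinal.isClosed_iff_iSup]
    intro ι hι f hf
    set t := ⨆ i, f i with htdef
    rcases le_or_gt κ.ord t with hk | hk
    · exact Or.inr hk
    · -- all f i < κ.ord hence in C
      have hbdd : BddAbove (Set.range f) := Ordinal.bddAbove_range f
      have hfC : ∀ i, f i ∈ C := by
        intro i
        exact hsub (hf i) (lt_of_le_of_lt (le_ciSup hbdd i) hk)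
      by_cases hattain : ∃ i, f i = t
      · obtain ⟨i, hi⟩ := hattain
        exact Or.inl (hi ▸ hfC i)
      · push_neg at hattain
        have hlt : ∀ i, f i < t := fun i => (le_ciSup hbdd i).lt_of_ne (hattain i)
        have ht0 : t ≠ 0 := by
          intro h0
          obtain i := Classical.arbitrary ι
          exact absurd (h0 ▸ hlt i) (not_lt_of_ge zero_le)
        refine Or.inl (hC.2.2 t hk ht0 ?_)
        intro b hb
        obtain ⟨i, hi⟩ : ∃ i, b < f i := by
          by_contra hcon
          push_neg at hcon
          exact absurd (ciSup_le hcon) (not_le.mpr hb)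
        exact ⟨f i, hfC i, hi, hlt i⟩
  have hnorm : Order.IsNormal (Ordinal.enumOrd s) :=
    (Ordinal.enumOrd_isNormal_iff_isClosed hsunb).mpr hclosed
  have henum_lt : ∀ β < κ.ord, Ordinal.enumOrd s β < κ.ord := by
    intro β
    induction β using Ordinal.induction with
    | _ β IH =>
      intro hβ
      have hxlt : Ordinal.bsup β (fun γ _ => Ordinal.enumOrd s γ) < κ.ord := by
        apply Ordinal.bsup_lt_ord (by rw [hcof]; exact (Cardinal.lt_ord.mp hβ))
        intro γ hγ
        exact IH γ hγ (hγ.trans hβ)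
      obtain ⟨c, hc, hxc⟩ := club_exists_gt hu.le hC hxlt
      have : Ordinal.enumOrd s β ≤ c := by
        apply Ordinal.enumOrd_le_of_forall_lt (Or.inl hc)
        intro γ hγ
        exact lt_of_le_of_lt (Ordinal.le_bsup (fun γ _ => Ordinal.enumOrd s γ) γ hγ) hxc
      exact lt_of_le_of_lt this (hC.1 hc)
  have hμord : μ.ord < κ.ord := Cardinal.ord_lt_ord.mpr hμκ
  set a := Ordinal.enumOrd s μ.ord with hadef
  have halt : a < κ.ord := henum_lt _ hμord
  have haC : a ∈ C := hsub (Ordinal.enumOrd_mem hsunb _) halt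
  have hacof : a.cof = μ := by
    rw [hadef, Ordinal.cof_map_of_isNormal hnorm (Cardinal.isSuccLimit_ord hμ.1), hμ.cof_eq]
  exact ⟨a, ⟨halt, hacof⟩, haC⟩

lemma isRegular_lift {κ : Cardinal.{0}} (hreg : κ.IsRegular) :
    (Cardinal.lift.{1} κ).IsRegular := by
  constructor
  · exact le_trans (by simp) (Cardinal.lift_le.mpr hreg.1)
  · rw [← Cardinal.lift_ord, ← Ordinal.lift_cof, hreg.cof_eq]

lemma pigeonhole {κ : Cardinal.{0}} (hreg : κ.IsRegular) {X : Type 1}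
    (f : ↥(Set.Iio κ.ord (α := Ordinal.{0})) → X)
    (hfib : ∀ x : X, #(f ⁻¹' {x}) < Cardinal.lift.{1} κ) :
    Cardinal.lift.{1} κ ≤ #(Set.range f) := by
  by_contra hcon
  push_neg at hcon
  have hdom : #(↥(Set.Iio κ.ord (α := Ordinal.{0}))) = Cardinal.lift.{1} κ := by
    rw [Ordinal.mk_Iio_ordinal, Cardinal.card_ord]
  set g : ↥(Set.Iio κ.ord (α := Ordinal.{0})) → Set.range f :=
    fun a => ⟨f a, Set.mem_range_self a⟩ with hg
  have hsum : #(Σ y : Set.range f, {a // g a = y}) = Cardinal.lift.{1} κ := by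
    rw [Cardinal.mk_congr (Equiv.sigmaFiberEquiv g), hdom]
  have : #(Σ y : Set.range f, {a // g a = y}) < Cardinal.lift.{1} κ := by
    rw [Cardinal.mk_sigma]
    apply Cardinal.sum_lt_of_isRegular (isRegular_lift hreg) hcon
    intro y
    have hmem : ∀ p : {a // g a = y}, p.1 ∈ f ⁻¹' {(y : X)} := by
      intro p
      simp only [Set.mem_preimage, Set.mem_singleton_iff]
      exact congrArg Subtype.val p.2
    have hinj : Function.Injective (fun p : {a // g a = y} =>
        (⟨p.1, hmem p⟩ : (f ⁻¹' {(y : X)}))) := by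
      intro p q hpq
      simp only [Subtype.mk.injEq] at hpq
      exact Subtype.ext hpq
    exact lt_of_le_of_lt (Cardinal.mk_le_of_injective hinj) (hfib y)
  rw [hsum] at this
  exact absurd this (lt_irrefl _)

lemma exists_disjoint_stationary_family {κ : Cardinal.{0}} (hreg : κ.IsRegular) (hu : ℵ₀ < κ) :
    ∃ (ι : Type 1) (T : ι → Set Ordinal.{0}),
      Cardinal.lift.{1} κ ≤ #ι ∧ (∀ i, T i ⊆ Set.Iio κ.ord ∧ IsStationaryIn (T i) κ.ord) ∧
      Pairwise (Function.onFun Disjoint T) := by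
  classical
  by_cases hsucc : ∃ ν : Cardinal.{0}, κ = Order.succ ν
  · -- successor case: Ulam matrix
    obtain ⟨ν, rfl⟩ := hsucc
    have hν : ℵ₀ ≤ ν := by
      by_contra hcon
      push_neg at hcon
      exact absurd (Order.succ_le_of_lt hcon) (not_le.mpr hu)
    set J := ν.ord.ToType with hJdef
    have hJne : Nonempty J := by
      rw [hJdef, Ordinal.toType_nonempty_iff_ne_zero]
      intro h0
      have : ν = 0 := by rw [← Cardinal.card_ord ν, h0, Ordinal.card_zero]
      rw [this] at hν
      exact absurd (le_zero_iff.mp hν) Cardinal.aleph0_ne_zero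
    have hJcard : #J = ν := by rw [hJdef, Cardinal.mk_toType, Cardinal.card_ord]
    have hνκ : ν < Order.succ ν := Order.lt_succ ν
    -- surjections onto initial segments
    have key : ∀ α : Ordinal.{0}, α < (Order.succ ν).ord →
        ∃ g : J → Ordinal.{0}, ∀ b < α, ∃ ξ, g ξ = b := by
      intro α hα
      have hcard : #α.ToType ≤ #J := by
        rw [Cardinal.mk_toType, hJcard]
        have := Cardinal.lt_ord.mp hα
        exact Order.lt_succ_iff.mp this
      obtain ⟨e⟩ := (Cardinal.le_def _ _).mp hcard
      set iso := Ordinal.ToType.mk (o := α) with hiso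
      refine ⟨fun ξ => if h : ∃ t : α.ToType, e t = ξ then (iso.symm h.choose).1 else 0, ?_⟩
      intro b hb
      refine ⟨e (iso ⟨b, hb⟩), ?_⟩
      have hex : ∃ t : α.ToType, e t = e (iso ⟨b, hb⟩) := ⟨iso ⟨b, hb⟩, rfl⟩
      beta_reduce
      rw [dif_pos hex]
      have : hex.choose = iso ⟨b, hb⟩ := e.injective hex.choose_spec
      rw [this, OrderIso.symm_apply_apply]
    choose G hG using fun (α : ↥(Set.Iio (Order.succ ν).ord (α := Ordinal.{0}))) =>
      key α.1 α.2
    set A : J → ↥(Set.Iio (Order.succ ν).ord (α := Ordinal.{0})) → Set Ordinal.{0} :=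
      fun ξ b => {α | ∃ h : α < (Order.succ ν).ord, b.1 < α ∧ G ⟨α, h⟩ ξ = b.1} with hA
    have hAsub : ∀ ξ b, A ξ b ⊆ Set.Iio (Order.succ ν).ord := by
      rintro ξ b α ⟨h, _⟩
      exact h
    have hstat : ∀ b, ∃ ξ : J, IsStationaryIn (A ξ b) (Order.succ ν).ord := by
      intro b
      apply exists_stationary_of_cover hreg hu (J := J) (by rw [hJcard]; exact hνκ)
        (hAsub · b) (stationary_Ioo hu.le b.2)
      rintro α ⟨hbα, hακ⟩
      obtain ⟨ξ, hξ⟩ := hG ⟨α, hακ⟩ b.1 hbα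
      exact Set.mem_iUnion.mpr ⟨ξ, hακ, hbα, hξ⟩
    choose F hF using hstat
    -- pigeonhole
    set f : ↥(Set.Iio (Order.succ ν).ord (α := Ordinal.{0})) → ULift.{1} J :=
      fun b => ULift.up (F b) with hfdef
    have hrange : #(Set.range f) < Cardinal.lift.{1} (Order.succ ν) := by
      refine lt_of_le_of_lt (Cardinal.mk_le_of_injective Subtype.val_injective) ?_
      rw [Cardinal.mk_uLift, hJcard]
      exact Cardinal.lift_lt.mpr hνκ
    have hfib : ∃ x, Cardinal.lift.{1} (Order.succ ν) ≤ #(f ⁻¹' {x}) := by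
      by_contra hcon
      push_neg at hcon
      exact absurd (pigeonhole hreg f (fun x => hcon x)) (not_le.mpr hrange)
    obtain ⟨x, hx⟩ := hfib
    refine ⟨↥(f ⁻¹' {x}), fun b => A x.down b.1, hx, ?_, ?_⟩
    · intro b
      have hFb : F b.1 = x.down := by
        have : f b.1 = x := b.2
        exact congrArg ULift.down this
      exact ⟨hAsub _ _, hFb ▸ hF b.1⟩
    · intro b b' hne
      rw [Function.onFun, Set.disjoint_left]
      rintro α ⟨h, hb, hgb⟩ ⟨h', hb', hgb'⟩
      apply hne
      ext1; ext1
      rw [← hgb, ← hgb']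
  · -- limit case: cofinality sets
    have hlim : ∀ μ : Cardinal.{0}, μ < κ → Order.succ μ < κ := by
      intro μ hμ
      refine lt_of_le_of_ne (Order.succ_le_of_lt hμ) (fun h => hsucc ⟨μ, h.symm⟩)
    set f : ↥(Set.Iio κ.ord (α := Ordinal.{0})) → Cardinal.{0} :=
      fun a => Order.succ (ℵ₀ ⊔ (a : Ordinal).card) with hfdef
    have hreg' : ∀ a, (f a).IsRegular := fun a => Cardinal.isRegular_succ le_sup_left
    have hlt' : ∀ a, f a < κ := by
      intro a
      exact hlim _ (max_lt hu (Cardinal.lt_ord.mp a.2))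
    have hfib : ∀ x : Cardinal.{0}, #(f ⁻¹' {x}) < Cardinal.lift.{1} κ := by
      intro x
      rcases Set.eq_empty_or_nonempty (f ⁻¹' {x}) with he | ⟨a₀, ha₀⟩
      · rw [he]
        simp only [Cardinal.mk_emptyCollection]
        exact lt_of_lt_of_le (by simpa using Cardinal.aleph0_pos) (le_trans
          (Cardinal.lift_le.mpr hu.le) le_rfl)
      · have hxκ : x < κ := ha₀ ▸ hlt' a₀
        have hinj : ∀ a : ↥(f ⁻¹' {x}), (a : Ordinal) < x.ord := by
          rintro ⟨a, ha⟩
          rw [Cardinal.lt_ord]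
          have : f a = x := ha
          calc (a : Ordinal).card ≤ ℵ₀ ⊔ (a : Ordinal).card := le_sup_right
            _ < Order.succ (ℵ₀ ⊔ (a : Ordinal).card) := Order.lt_succ _
            _ = x := this
        have hinj2 : Function.Injective (fun a : ↥(f ⁻¹' {x}) =>
            (⟨(a : Ordinal), hinj a⟩ : ↥(Set.Iio x.ord (α := Ordinal.{0})))) := by
          intro p q hpq
          simp only [Subtype.mk.injEq] at hpq
          ext1; ext1
          exact Subtype.mk.inj hpq
        have : #(f ⁻¹' {x}) ≤ #(↥(Set.Iio x.ord (α := Ordinal.{0}))) :=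
          Cardinal.mk_le_of_injective hinj2
        refine lt_of_le_of_lt this ?_
        rw [Ordinal.mk_Iio_ordinal, Cardinal.card_ord]
        exact Cardinal.lift_lt.mpr hxκ
    have hrange := pigeonhole hreg f hfib
    refine ⟨↥(Set.range f), fun y => {a : Ordinal | a < κ.ord ∧ a.cof = y.1}, hrange, ?_, ?_⟩
    · rintro ⟨y, a, rfl⟩
      exact ⟨fun x hx => hx.1, stationary_cof hreg hu (hreg' a) (hlt' a)⟩
    · intro y y' hne
      rw [Function.onFun, Set.disjoint_left]
      rintro α ⟨h1, h2⟩ ⟨h1', h2'⟩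
      exact hne (Subtype.ext (h2 ▸ h2'))

lemma haus_sep {α : Type*} (S T : Finset (Set α)) (hd : ∀ X ∈ S, ∀ Y ∈ T, X ≠ Y) :
    ∃ (F : Finset α) (G : Finset (Finset α)),
      (∀ X ∈ S, ∃ H ∈ G, ∀ a, a ∈ H ↔ a ∈ F ∧ a ∈ X) ∧
      (∀ Y ∈ T, ¬ ∃ H ∈ G, ∀ a, a ∈ H ↔ a ∈ F ∧ a ∈ Y) := by
  classical
  have hpair : ∀ X ∈ S, ∀ Y ∈ T, ∃ a, ¬(a ∈ X ↔ a ∈ Y) := by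
    intro X hX Y hY
    by_contra hcon
    push_neg at hcon
    exact hd X hX Y hY (Set.ext hcon)
  set F : Finset α := (S ×ˢ T).biUnion (fun p =>
    if h : ∃ a, ¬(a ∈ p.1 ↔ a ∈ p.2) then {h.choose} else ∅) with hF
  have hsep : ∀ X ∈ S, ∀ Y ∈ T, ∃ a ∈ F, ¬(a ∈ X ↔ a ∈ Y) := by
    intro X hX Y hY
    have h := hpair X hX Y hY
    refine ⟨h.choose, ?_, h.choose_spec⟩
    rw [hF, Finset.mem_biUnion]
    refine ⟨(X, Y), Finset.mem_product.mpr ⟨hX, hY⟩, ?_⟩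
    rw [dif_pos h]
    exact Finset.mem_singleton_self _
  refine ⟨F, S.image (fun X => F.filter (· ∈ X)), ?_, ?_⟩
  · intro X hX
    exact ⟨F.filter (· ∈ X), Finset.mem_image_of_mem _ hX,
      fun a => by simp [Finset.mem_filter]⟩
  · rintro Y hY ⟨H, hHG, hmatch⟩
    obtain ⟨X, hX, rfl⟩ := Finset.mem_image.mp hHG
    obtain ⟨a, haF, hsepa⟩ := hsep X hX Y hY
    apply hsepa
    have h1 : a ∈ F.filter (· ∈ X) ↔ a ∈ F ∧ a ∈ X := by simp [Finset.mem_filter]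
    have h2 := hmatch a
    constructor
    · intro haX
      exact (h2.mp (h1.mpr ⟨haF, haX⟩)).2
    · intro haY
      exact (h1.mp (h2.mpr ⟨haF, haY⟩)).2


/-- on an uncountable regular `κ`, for every `λ` with `ω ≤ λ ≤ 2^κ`
there is a `𝓒`-independent family of cardinality `λ`: all finite Boolean combinations
are stationary in `κ`. -/
theorem exists_club_independent_of_card (κ l : Cardinal.{0})
    (hreg : κ.IsRegular) (hu : ℵ₀ < κ) (hl1 : ℵ₀ ≤ l) (hl2 : l ≤ 2 ^ κ) :
    ∃ 𝓘 : Set (Set Ordinal.{0}), (∀ I ∈ 𝓘, I ⊆ Set.Iio κ.ord) ∧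
      #𝓘 = Cardinal.lift.{1} l ∧
      ∀ S T : Finset (Set Ordinal.{0}), ↑S ⊆ 𝓘 → ↑T ⊆ 𝓘 → Disjoint S T →
        IsStationaryIn ((Set.Iio κ.ord ∩ ⋂ I ∈ S, I) \ ⋃ I ∈ T, I) κ.ord := by
  classical
  set σ := ↥(Set.Iio κ.ord (α := Ordinal.{0})) with hσ
  have hσcard : #σ = Cardinal.lift.{1} κ := by
    rw [hσ, Ordinal.mk_Iio_ordinal, Cardinal.card_ord]
  have hσinf : Infinite σ := by
    rw [Cardinal.infinite_iff, hσcard]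
    exact le_trans (by simp) (Cardinal.lift_le.mpr hreg.1)
  set D := Finset σ × Finset (Finset σ) with hD
  have hDcard : #D = Cardinal.lift.{1} κ := by
    have h1 : #(Finset σ) = Cardinal.lift.{1} κ := by
      rw [Cardinal.mk_finset_of_infinite, hσcard]
    have h2 : #(Finset (Finset σ)) = Cardinal.lift.{1} κ := by
      have : Infinite (Finset σ) := by
        rw [Cardinal.infinite_iff, h1]
        exact le_trans (by simp) (Cardinal.lift_le.mpr hreg.1)
      rw [Cardinal.mk_finset_of_infinite, h1]
    rw [hD, Cardinal.mk_prod, Cardinal.lift_id, Cardinal.lift_id, h1, h2]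
    exact Cardinal.mul_eq_self (le_trans (by simp) (Cardinal.lift_le.mpr hreg.1))
  obtain ⟨ι, Tf, hι, hTf, hTdisj⟩ := exists_disjoint_stationary_family hreg hu
  have hDι : #D ≤ #ι := hDcard ▸ hι
  obtain ⟨emb⟩ := (Cardinal.le_def _ _).mp hDι
  set Ts : D → Set Ordinal.{0} := fun d => Tf (emb d) with hTs
  have hTs_sub : ∀ d, Ts d ⊆ Set.Iio κ.ord := fun d => (hTf (emb d)).1
  have hTs_stat : ∀ d, IsStationaryIn (Ts d) κ.ord := fun d => (hTf (emb d)).2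
  have hTs_disj : ∀ d d' : D, d ≠ d' → Disjoint (Ts d) (Ts d') :=
    fun d d' h => hTdisj (fun he => h (emb.injective he))
  set A : Set σ → Set D := fun X =>
    {d | ∃ H ∈ d.2, ∀ a, a ∈ H ↔ a ∈ d.1 ∧ a ∈ X} with hA
  set B : Set σ → Set Ordinal.{0} := fun X => ⋃ d ∈ A X, Ts d with hB
  have hBsub : ∀ X, B X ⊆ Set.Iio κ.ord := by
    intro X x hx
    obtain ⟨d, _, hxd⟩ := Set.mem_iUnion₂.mp hx
    exact hTs_sub d hxd
  -- master lemma
  have master : ∀ S' T' : Finset (Set σ), (∀ X ∈ S', ∀ Y ∈ T', X ≠ Y) →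
      IsStationaryIn ((Set.Iio κ.ord ∩ ⋂ X ∈ S', B X) \ ⋃ Y ∈ T', B Y) κ.ord := by
    intro S' T' hdist
    obtain ⟨F, G, hFG1, hFG2⟩ := haus_sep S' T' hdist
    set d₀ : D := (F, G) with hd₀
    have hsub : Ts d₀ ⊆ (Set.Iio κ.ord ∩ ⋂ X ∈ S', B X) \ ⋃ Y ∈ T', B Y := by
      intro x hx
      refine ⟨⟨hTs_sub d₀ hx, ?_⟩, ?_⟩
      · rw [Set.mem_iInter₂]
        intro X hX
        exact Set.mem_iUnion₂.mpr ⟨d₀, hFG1 X hX, hx⟩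
      · intro hxU
        obtain ⟨Y, hY, hxY⟩ := Set.mem_iUnion₂.mp hxU
        obtain ⟨d, hdA, hxd⟩ := Set.mem_iUnion₂.mp hxY
        have hne : d ≠ d₀ := by
          intro he
          have hd₀A : d₀ ∈ A Y := he ▸ hdA
          exact hFG2 Y hY hd₀A
        exact Set.disjoint_left.mp (hTs_disj d d₀ hne) hxd hx
    exact stationary_superset (hTs_stat d₀) hsub (fun x hx => hx.1.1)
  -- select the family
  have hset : Cardinal.lift.{1} l ≤ #(Set σ) := by
    rw [Cardinal.mk_set, hσcard, ← Cardinal.lift_two.{1, 0}, ← Cardinal.lift_power]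
    exact Cardinal.lift_le.mpr hl2
  obtain ⟨𝒴, h𝒴⟩ := Cardinal.le_mk_iff_exists_set.mp hset
  have hBne : ∀ X Y : Set σ, X ≠ Y → B X ≠ B Y := by
    intro X Y hXY
    have hst := master {X} {Y} (by simpa using hXY)
    obtain ⟨x, hx⟩ := hst.2 _ (club_Iio κ)
    simp only [Finset.mem_singleton, Set.mem_inter_iff, Set.mem_diff,
      Set.iInter_iInter_eq_left, Set.iUnion_iUnion_eq_left] at hx
    intro hBeq
    obtain ⟨⟨⟨_, hx1⟩, hx2⟩, _⟩ := hx
    rw [hBeq] at hx1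
    exact hx2 hx1
  refine ⟨B '' 𝒴, ?_, ?_, ?_⟩
  · rintro I ⟨X, _, rfl⟩
    exact hBsub X
  · rw [Cardinal.mk_image_eq_of_injOn B 𝒴 (fun X _ Y _ h => by_contra fun hne =>
      hBne X Y hne h), h𝒴]
  · intro S T hS hT hdisjST
    have hsec : ∀ I : Set Ordinal.{0}, ∃ X : Set σ, I ∈ B '' 𝒴 → X ∈ 𝒴 ∧ B X = I := by
      intro I
      by_cases hI : I ∈ B '' 𝒴
      · obtain ⟨X, hX, hBX⟩ := hI
        exact ⟨X, fun _ => ⟨hX, hBX⟩⟩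
      · exact ⟨∅, fun h => absurd h hI⟩
    choose sec hsec using hsec
    have hsecS : ∀ I ∈ S, B (sec I) = I := fun I hI => (hsec I (hS hI)).2
    have hsecT : ∀ I ∈ T, B (sec I) = I := fun I hI => (hsec I (hT hI)).2
    set S' := S.image sec with hS'
    set T' := T.image sec with hT'
    have hdist : ∀ X ∈ S', ∀ Y ∈ T', X ≠ Y := by
      intro X hX Y hY hXY
      obtain ⟨I, hI, rfl⟩ := Finset.mem_image.mp hX
      obtain ⟨I', hI', rfl⟩ := Finset.mem_image.mp hY
      have : I = I' := by rw [← hsecS I hI, ← hsecT I' hI', hXY]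
      exact Finset.disjoint_left.mp hdisjST hI (this ▸ hI')
    have heq : (Set.Iio κ.ord ∩ ⋂ X ∈ S', B X) \ ⋃ Y ∈ T', B Y =
        (Set.Iio κ.ord ∩ ⋂ I ∈ S, I) \ ⋃ I ∈ T, I := by
      have e1 : (⋂ X ∈ S', B X) = ⋂ I ∈ S, I := by
        ext x
        simp only [Set.mem_iInter, hS', Finset.mem_image]
        constructor
        · intro h I hI
          rw [← hsecS I hI]
          exact h _ ⟨I, hI, rfl⟩
        · rintro h X ⟨I, hI, rfl⟩
          rw [hsecS I hI]
          exact h I hI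
      have e2 : (⋃ Y ∈ T', B Y) = ⋃ I ∈ T, I := by
        ext x
        simp only [Set.mem_iUnion, hT', Finset.mem_image]
        constructor
        · rintro ⟨X, ⟨I, hI, rfl⟩, hx⟩
          exact ⟨I, hI, (hsecT I hI) ▸ hx⟩
        · rintro ⟨I, hI, hx⟩
          exact ⟨sec I, ⟨I, hI, rfl⟩, (hsecT I hI).symm ▸ hx⟩
      rw [e1, e2]
    have := master S' T' hdist
    rwa [heq] at this
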